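/- For a 2-permutation σ of degree n, the following are equivalent: (i) for every interval {a,a+1,…,b} ⊆ {1,…,n} with a < b, the restriction σ^{|{a,…,b}} is bounded cuttable; (ii) for every subset L ⊆ {1,…,n} with |L| ≥ 2, the restriction σ^{|L} is bounded cuttable. -/

import Mathlib

/-- `σ` is a `k`-permutation of degree `n`: a word over the alphabet `{1, …, n}`
in which every value `i ∈ {1, …, n}` occurs exactly `k` times (and no other
letter occurs). -/
def IsMultiPerm (k n : ℕ) (σ : List ℕ) : Prop :=
  ∀ i : ℕ, σ.count i = if 1 ≤ i ∧ i ≤ n then k else 0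

/-- The restriction `σ^{|L}` of a multipermutation `σ` to a set `L` of values:
delete all letters whose value is not in `L`, and replace, for each `x`, the
`x`-th smallest element of `L` by `x`. -/
def restrict (σ : List ℕ) (L : Finset ℕ) : List ℕ :=
  (σ.filter fun x => decide (x ∈ L)).map fun x => (L.filter fun y => y ≤ x).card

/-- `γ` is a bounded cut of the `2`-permutation `σ` of degree `n`:
`1 ≤ γ ≤ n - 1` and `σ = f·μ·ν·l` where `f` and `l` are the first and last
letters of `σ` and `μ`, `ν` are words such that every letter of `μ` is at most
`γ` and every letter of `ν` is greater than `γ`. -/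
def IsBoundedCut (n : ℕ) (σ : List ℕ) (γ : ℕ) : Prop :=
  1 ≤ γ ∧ γ ≤ n - 1 ∧
    ∃ (f l : ℕ) (μ ν : List ℕ),
      σ = f :: (μ ++ ν ++ [l]) ∧ (∀ x ∈ μ, x ≤ γ) ∧ (∀ x ∈ ν, γ < x)

/-- A `2`-permutation of degree `n` is bounded cuttable if it has a bounded cut. -/
def BoundedCuttable (n : ℕ) (σ : List ℕ) : Prop :=
  ∃ γ, IsBoundedCut n σ γ

/-- A `2`-permutation of degree `n` is fully bounded cuttable if its restriction
to every interval `{a, …, b} ⊆ {1, …, n}` with `a < b` is bounded cuttable. -/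
def FullyBoundedCuttable (n : ℕ) (σ : List ℕ) : Prop :=
  ∀ a b : ℕ, 1 ≤ a → a < b → b ≤ n →
    BoundedCuttable (Finset.Icc a b).card (restrict σ (Finset.Icc a b))
open List

private lemma rank_Icc (a b x : ℕ) (h1 : a ≤ x) (h2 : x ≤ b) :
    ((Finset.Icc a b).filter (fun y => y ≤ x)).card = x + 1 - a := by
  have : (Finset.Icc a b).filter (fun y => y ≤ x) = Finset.Icc a x := by
    ext y
    simp only [Finset.mem_filter, Finset.mem_Icc]
    omega
  rw [this, Nat.card_Icc]

theorem fullyBoundedCuttable_iff (n : ℕ) (hn : 1 ≤ n) (σ : List ℕ)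
    (hσ : IsMultiPerm 2 n σ) :
    FullyBoundedCuttable n σ ↔
      ∀ L : Finset ℕ, L ⊆ Finset.Icc 1 n → 2 ≤ L.card →
        BoundedCuttable L.card (restrict σ L) := by
  constructor
  · intro hF L hL hcard
    have hLne : L.Nonempty := Finset.card_pos.mp (by omega)
    set a := L.min' hLne with ha
    set b := L.max' hLne with hb
    have haL : a ∈ L := L.min'_mem hLne
    have hbL : b ∈ L := L.max'_mem hLne
    have hab : a < b := L.min'_lt_max'_of_card (by omega)
    have ha1 : 1 ≤ a := (Finset.mem_Icc.mp (hL haL)).1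
    have hbn : b ≤ n := (Finset.mem_Icc.mp (hL hbL)).2
    obtain ⟨γI, hγ1, hγ2, fI, lI, μI, νI, hdec, hμI, hνI⟩ := hF a b ha1 hab hbn
    rw [Nat.card_Icc] at hγ2
    set c := a + γI - 1 with hc
    have hac : a ≤ c := by omega
    have hcb : c < b := by omega
    -- unfold restrict for the interval
    set σI := σ.filter (fun x => decide (x ∈ Finset.Icc a b)) with hσI
    have hresI : restrict σ (Finset.Icc a b)
        = σI.map (fun x => ((Finset.Icc a b).filter (fun y => y ≤ x)).card) := rfl
    rw [hresI] at hdec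
    obtain ⟨f₀, rest₀, hσIeq, hf₀, hrest₀⟩ := List.map_eq_cons_iff.mp hdec
    rw [show μI ++ νI ++ [lI] = μI ++ (νI ++ [lI]) by simp] at hrest₀
    obtain ⟨μ₀, rest₁, hrest₀eq, hμ₀, hrest₁⟩ := List.map_eq_append_iff.mp hrest₀
    obtain ⟨ν₀, rest₂, hrest₁eq, hν₀, hrest₂⟩ := List.map_eq_append_iff.mp hrest₁
    obtain ⟨l₀, rest₃, hrest₂eq, hl₀, hrest₃⟩ := List.map_eq_cons_iff.mp hrest₂
    have hrest₃nil : rest₃ = [] := by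
      have := congrArg List.length hrest₃
      simp at this
      exact this
    subst hrest₃nil
    subst hrest₂eq; subst hrest₁eq; subst hrest₀eq
    -- σI = f₀ :: (μ₀ ++ (ν₀ ++ [l₀]))
    -- membership facts
    have hmemI : ∀ x ∈ σI, a ≤ x ∧ x ≤ b := by
      intro x hx
      have := List.of_mem_filter hx
      simpa [Finset.mem_Icc] using this
    have hμ₀c : ∀ x ∈ μ₀, x ≤ c := by
      intro x hx
      have hxI : a ≤ x ∧ x ≤ b := hmemI x (by rw [hσIeq]; simp [hx])
      have : ((Finset.Icc a b).filter (fun y => y ≤ x)).card ≤ γI := by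
        apply hμI
        rw [← hμ₀]
        exact List.mem_map_of_mem hx
      rw [rank_Icc a b x hxI.1 hxI.2] at this
      omega
    have hν₀c : ∀ x ∈ ν₀, c < x := by
      intro x hx
      have hxI : a ≤ x ∧ x ≤ b := hmemI x (by rw [hσIeq]; simp [hx])
      have : γI < ((Finset.Icc a b).filter (fun y => y ≤ x)).card := by
        apply hνI
        rw [← hν₀]
        exact List.mem_map_of_mem hx
      rw [rank_Icc a b x hxI.1 hxI.2] at this
      omega
    -- the filtered list for L
    set p : ℕ → Bool := fun x => decide (x ∈ L) with hp
    set σL := σ.filter p with hσL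
    have hLab : ∀ x ∈ L, a ≤ x ∧ x ≤ b := fun x hx => ⟨L.min'_le x hx, L.le_max' x hx⟩
    have hfil : σL = σI.filter p := by
      rw [hσI, List.filter_filter]
      apply List.filter_congr
      intro x hx
      by_cases hxL : x ∈ L
      · have := hLab x hxL
        simp [hp, hxL, Finset.mem_Icc, this.1, this.2]
      · simp [hp, hxL]
    -- σL has length ≥ 2
    have haσ : a ∈ σ := by
      rw [← List.count_pos_iff, hσ a, if_pos ⟨ha1, by omega⟩]
      omega
    have hbσ : b ∈ σ := by
      rw [← List.count_pos_iff, hσ b, if_pos ⟨by omega, hbn⟩]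
      omega
    have haσL : a ∈ σL := List.mem_filter.mpr ⟨haσ, by simp [hp, haL]⟩
    have hbσL : b ∈ σL := List.mem_filter.mpr ⟨hbσ, by simp [hp, hbL]⟩
    have hlen2 : ∃ g t k, σL = g :: (t ++ [k]) := by
      match hm : σL with
      | [] => simp at haσL
      | [z] =>
        simp at haσL hbσL
        omega
      | z1 :: z2 :: r =>
        refine ⟨z1, (z2 :: r).dropLast, (z2 :: r).getLast (by simp), ?_⟩
        rw [List.dropLast_append_getLast]
    obtain ⟨g, t, k, hgtk⟩ := hlen2
    -- t is a sublist of μ₀.filter p ++ ν₀.filter p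
    set w : List ℕ := μ₀.filter p ++ ν₀.filter p with hw
    have hsub : t <+ w := by
      have heq : g :: (t ++ [k]) =
          (if p f₀ then [f₀] else []) ++ (w ++ (if p l₀ then [l₀] else [])) := by
        rw [← hgtk, hfil, hσIeq]
        simp only [List.filter_cons, List.filter_append]
        by_cases h1 : p f₀ <;> by_cases h2 : p l₀ <;>
          simp [h1, h2, hw, List.append_assoc]
      by_cases h1 : p f₀ <;> by_cases h2 : p l₀ <;> simp [h1, h2] at heq
      · -- both: t ++ [k] = w ++ [l₀]
        have := heq.2.1
        rw [this]
      · -- f yes, l no: t ++ [k] = w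
        rw [← heq.2]
        exact List.sublist_append_left t [k]
      · -- f no, l yes: g :: t = w
        have := (List.append_inj' (show (g :: t) ++ [k] = w ++ [l₀] by simpa using heq)
          (by simp)).1
        rw [← this]
        exact List.sublist_cons_self g t
      · -- neither: g :: (t ++ [k]) = w
        rw [← heq]
        exact ((List.sublist_append_left t [k]).trans (List.sublist_cons_self g _))
    obtain ⟨A, B, htAB, hAs, hBs⟩ := List.sublist_append_iff.mp hsub
    set rL : ℕ → ℕ := fun x => (L.filter (fun y => y ≤ x)).card with hrL
    set γ : ℕ := (L.filter (fun y => y ≤ c)).card with hγ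
    refine ⟨γ, ?_, ?_, rL g, rL k, A.map rL, B.map rL, ?_, ?_, ?_⟩
    · -- 1 ≤ γ
      rw [hγ]
      have : a ∈ L.filter (fun y => y ≤ c) := Finset.mem_filter.mpr ⟨haL, hac⟩
      exact Finset.card_pos.mpr ⟨a, this⟩
    · -- γ ≤ card - 1
      have : L.filter (fun y => y ≤ c) ⊂ L :=
        Finset.filter_ssubset.mpr ⟨b, hbL, by omega⟩
      have := Finset.card_lt_card this
      omega
    · -- the decomposition
      show restrict σ L = _
      rw [restrict, ← hσL, hgtk, htAB]
      simp [hrL]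
    · -- μ values ≤ γ
      intro y hy
      obtain ⟨x, hxA, rfl⟩ := List.mem_map.mp hy
      have hxμ : x ∈ μ₀.filter p := hAs.subset hxA
      have hxc : x ≤ c := hμ₀c x (List.mem_of_mem_filter hxμ)
      have hxL : x ∈ L := by
        have := List.of_mem_filter hxμ
        simpa [hp] using this
      rw [hrL, hγ]
      apply Finset.card_le_card
      apply Finset.monotone_filter_right
      intro y _ hy
      exact le_trans hy hxc
    · -- ν values > γ
      intro y hy
      obtain ⟨x, hxB, rfl⟩ := List.mem_map.mp hy
      have hxν : x ∈ ν₀.filter p := hBs.subset hxB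
      have hxc : c < x := hν₀c x (List.mem_of_mem_filter hxν)
      have hxL : x ∈ L := by
        have := List.of_mem_filter hxν
        simpa [hp] using this
      rw [hrL, hγ]
      apply Finset.card_lt_card
      constructor
      · apply Finset.monotone_filter_right
        intro y hy
        omega
      · intro hcon
        have : x ∈ L.filter (fun y => y ≤ c) := hcon (Finset.mem_filter.mpr ⟨hxL, le_refl x⟩)
        have := (Finset.mem_filter.mp this).2
        omega
  · intro h a b ha hab hbn
    exact h (Finset.Icc a b) (Finset.Icc_subset_Icc ha hbn)
      (by rw [Nat.card_Icc]; omega)
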